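/- Let a₁, …, a_T be nonnegative reals. Then ∑_{t=1}^T a_t / √(1 + ∑_{s<t} a_s) ≤ 3·√(∑_{t=1}^T a_t) + max_{t ≤ T} a_t. -/

import Mathlib

open Finset

private lemma key_step (x c m : ℝ) (hx : 1 ≤ x) (hc : 0 ≤ c) (hcm : c ≤ m) :
    c / Real.sqrt x ≤
      2 * (Real.sqrt (x + c) - Real.sqrt x) +
        m * (1 / Real.sqrt x - 1 / Real.sqrt (x + c)) := by
  have hx0 : (0:ℝ) < x := lt_of_lt_of_le one_pos hx
  have hxc0 : (0:ℝ) < x + c := by linarith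
  set u := Real.sqrt x with hu
  set v := Real.sqrt (x + c) with hv
  have hu0 : 0 < u := Real.sqrt_pos.mpr hx0
  have hv0 : 0 < v := Real.sqrt_pos.mpr hxc0
  have hu2 : u ^ 2 = x := Real.sq_sqrt hx0.le
  have hv2 : v ^ 2 = x + c := Real.sq_sqrt hxc0.le
  have huv : u ≤ v := Real.sqrt_le_sqrt (by linarith)
  have h1 : c / v ≤ 2 * (v - u) := by
    rw [div_le_iff₀ hv0]
    nlinarith [sq_nonneg (u - v)]
  have h2 : c / u ≤ c / v + m * (1 / u - 1 / v) := by
    have e1 : c / u - c / v = c * (v - u) / (u * v) := by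
      field_simp
    have e2 : (1:ℝ) / u - 1 / v = (v - u) / (u * v) := by
      field_simp
    have h3 : c * (v - u) ≤ m * (v - u) :=
      mul_le_mul_of_nonneg_right hcm (by linarith)
    have h4 : c * (v - u) / (u * v) ≤ m * (v - u) / (u * v) :=
      div_le_div_of_nonneg_right h3 (by positivity) |>.trans_eq rfl
    rw [e2, ← mul_div_assoc]
    linarith [e1, h4]
  calc c / u ≤ c / v + m * (1 / u - 1 / v) := h2
    _ ≤ 2 * (v - u) + m * (1 / u - 1 / v) := by linarith

theorem stmt_8 (T : ℕ) (hT : 0 < T) (a : Fin T → ℝ) (ha : ∀ t, 0 ≤ a t) :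
    ∑ t : Fin T, a t / Real.sqrt (1 + ∑ s ∈ Finset.univ.filter (fun s => s < t), a s) ≤
      3 * Real.sqrt (∑ t : Fin T, a t) +
        Finset.univ.sup' ⟨⟨0, hT⟩, Finset.mem_univ _⟩ a := by
  set m := Finset.univ.sup' ⟨⟨0, hT⟩, Finset.mem_univ _⟩ a with hm
  have hma : ∀ t, a t ≤ m := fun t => Finset.le_sup' a (mem_univ t)
  have hm0 : 0 ≤ m := le_trans (ha ⟨0, hT⟩) (hma ⟨0, hT⟩)
  set b : ℕ → ℝ := fun n => if h : n < T then a ⟨n, h⟩ else 0 with hb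
  have hb0 : ∀ n, 0 ≤ b n := by
    intro n; simp only [hb]; split; exacts [ha _, le_refl 0]
  have hbm : ∀ n, b n ≤ m := by
    intro n; simp only [hb]; split; exacts [hma _, hm0]
  set S : ℕ → ℝ := fun n => ∑ i ∈ range n, b i with hS
  have hS0 : ∀ n, 0 ≤ S n := fun n => Finset.sum_nonneg fun i _ => hb0 i
  -- rewrite the filtered sum
  have hfilt : ∀ t : Fin T, ∑ s ∈ Finset.univ.filter (fun s => s < t), a s = S t.val := by
    intro t
    have h1 : ∑ s ∈ Finset.univ.filter (fun s => s < t), a s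
        = ∑ s : Fin T, (fun n => if n < t.val then b n else 0) s.val := by
      rw [Finset.sum_filter]
      refine Finset.sum_congr rfl fun s _ => ?_
      by_cases h : s < t
      · simp [h, Fin.lt_def.mp h, hb, s.is_lt]
      · simp [h, fun hh => h (Fin.lt_def.mpr hh)]
    have h2 : ∑ s : Fin T, (fun n => if n < t.val then b n else 0) s.val
        = ∑ i ∈ range T, (if i < t.val then b i else 0) :=
      Fin.sum_univ_eq_sum_range (fun n => if n < t.val then b n else 0) T
    have h3 : (range T).filter (fun i => i < t.val) = range t.val := by
      ext i; simp only [mem_filter, mem_range]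
      exact ⟨fun h => h.2, fun h => ⟨lt_trans h t.is_lt, h⟩⟩
    rw [h1, h2, ← Finset.sum_filter, h3]
  -- rewrite the LHS
  have hLHS : ∑ t : Fin T, a t / Real.sqrt (1 + ∑ s ∈ Finset.univ.filter (fun s => s < t), a s)
      = ∑ i ∈ range T, b i / Real.sqrt (1 + S i) := by
    have := Fin.sum_univ_eq_sum_range (fun n => b n / Real.sqrt (1 + S n)) T
    rw [← this]
    refine Finset.sum_congr rfl fun t _ => ?_
    rw [hfilt t]
    congr 1
    simp [hb, t.is_lt]
  have hA : ∑ t : Fin T, a t = S T := by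
    show ∑ t : Fin T, a t = ∑ i ∈ range T, b i
    rw [← Fin.sum_univ_eq_sum_range b T]
    refine Finset.sum_congr rfl fun t _ => ?_
    simp [hb, t.is_lt]
  rw [hLHS, hA]
  set A := S T with hAA
  have hA0 : 0 ≤ A := hS0 T
  -- telescoping function
  set f : ℕ → ℝ := fun n => 2 * Real.sqrt (1 + S n) - m / Real.sqrt (1 + S n) with hf
  have hstep : ∀ i, b i / Real.sqrt (1 + S i) ≤ f (i + 1) - f i := by
    intro i
    have hSS : S (i + 1) = S i + b i := Finset.sum_range_succ b i
    have h := key_step (1 + S i) (b i) m (by linarith [hS0 i]) (hb0 i) (hbm i)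
    have he : 1 + S i + b i = 1 + S (i + 1) := by rw [hSS]; ring
    rw [he] at h
    calc b i / Real.sqrt (1 + S i)
        ≤ 2 * (Real.sqrt (1 + S (i+1)) - Real.sqrt (1 + S i)) +
            m * (1 / Real.sqrt (1 + S i) - 1 / Real.sqrt (1 + S (i+1))) := h
      _ = f (i + 1) - f i := by
          show _ = (2 * Real.sqrt (1 + S (i+1)) - m / Real.sqrt (1 + S (i+1)))
              - (2 * Real.sqrt (1 + S i) - m / Real.sqrt (1 + S i))
          ring
  have htel : ∑ i ∈ range T, b i / Real.sqrt (1 + S i) ≤ f T - f 0 := by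
    calc ∑ i ∈ range T, b i / Real.sqrt (1 + S i)
        ≤ ∑ i ∈ range T, (f (i + 1) - f i) :=
          Finset.sum_le_sum fun i _ => hstep i
      _ = f T - f 0 := Finset.sum_range_sub f T
  refine htel.trans ?_
  have hS0' : S 0 = 0 := by simp [hS]
  have hsq1 : Real.sqrt (1 + A) ≤ 1 + Real.sqrt A := by
    have h1 : (1 + A) ≤ (1 + Real.sqrt A) ^ 2 := by
      nlinarith [Real.sq_sqrt hA0, Real.sqrt_nonneg A]
    calc Real.sqrt (1 + A) ≤ Real.sqrt ((1 + Real.sqrt A) ^ 2) := Real.sqrt_le_sqrt h1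
      _ = 1 + Real.sqrt A := Real.sqrt_sq (by positivity)
  have hsA0 : 0 < Real.sqrt (1 + A) := Real.sqrt_pos.mpr (by linarith)
  have hdiv : 0 ≤ m / Real.sqrt (1 + A) := by positivity
  show (2 * Real.sqrt (1 + A) - m / Real.sqrt (1 + A))
      - (2 * Real.sqrt (1 + S 0) - m / Real.sqrt (1 + S 0)) ≤ _
  rw [hS0', show (1:ℝ) + 0 = 1 by ring, Real.sqrt_one]
  have hsqA : 0 ≤ Real.sqrt A := Real.sqrt_nonneg A
  calc 2 * Real.sqrt (1 + A) - m / Real.sqrt (1 + A) - (2 * 1 - m / 1)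
      ≤ 2 * (1 + Real.sqrt A) - 0 - (2 - m) := by
        simp only [div_one]
        linarith
    _ = 2 * Real.sqrt A + m := by ring
    _ ≤ 3 * Real.sqrt A + m := by linarith
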